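/- Let R be a commutative noetherian UFD and A an m×n matrix over R with determinantal rank exactly 1 (some entry is nonzero and all 2×2 minors vanish). Then either the ideal I₁(A) generated by the entries of A equals R, or height I₁(A) ≤ max{m, n}. -/

import Mathlib

universe u

section KrullHeight
variable {R : Type*} [CommRing R]


/-- Membership in the contraction of the extension of an ideal in the localization at a prime. -/
lemma mem_comap_map_atPrime (q : Ideal R) [q.IsPrime] (I : Ideal R) (x : R) :
    x ∈ Ideal.comap (algebraMap R (Localization.AtPrime q))
      (Ideal.map (algebraMap R (Localization.AtPrime q)) I) ↔ ∃ u ∉ q, u * x ∈ I := by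
  constructor
  · intro hx
    rw [Ideal.mem_comap, IsLocalization.mem_map_algebraMap_iff q.primeCompl] at hx
    obtain ⟨⟨⟨i, hi⟩, ⟨u, hu⟩⟩, h⟩ := hx
    rw [← _root_.map_mul, IsLocalization.eq_iff_exists q.primeCompl] at h
    obtain ⟨⟨c, hc⟩, hcx⟩ := h
    refine ⟨c * u, fun hmem => ?_, ?_⟩
    · rcases ‹q.IsPrime›.mem_or_mem hmem with h | h
      · exact hc h
      · exact hu h
    · have h2 : c * u * x = c * i := by
        have : c * (x * u) = c * i := hcx
        calc c * u * x = c * (x * u) := by ring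
        _ = c * i := this
      rw [h2]
      exact I.mul_mem_left c hi
  · rintro ⟨u, hu, hux⟩
    rw [Ideal.mem_comap]
    have hunit : IsUnit (algebraMap R (Localization.AtPrime q) u) :=
      IsLocalization.map_units _ (⟨u, hu⟩ : q.primeCompl)
    obtain ⟨v, hv⟩ := hunit.exists_left_inv
    have heq : algebraMap R (Localization.AtPrime q) x =
        v * algebraMap R (Localization.AtPrime q) (u * x) := by
      rw [_root_.map_mul, ← mul_assoc, hv, one_mul]
    rw [heq]
    exact Ideal.mul_mem_left _ v (Ideal.mem_map_of_mem _ hux)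

/-- A finitely generated module over `R` annihilated by a maximal ideal is Artinian. -/
lemma isArtinian_of_max_ann {M : Type*} [AddCommGroup M] [Module R M] (p : Ideal R)
    (hp : p.IsMaximal) [Module.Finite R M]
    (hann : ∀ r ∈ p, ∀ m : M, r • m = 0) : IsArtinian R M := by
  have htor : Module.IsTorsionBySet R M (p : Set R) := fun x r => hann r.1 r.2 x
  letI := htor.module
  haveI : IsScalarTower R (R ⧸ p) M := htor.isScalarTower (S := R)
  letI : Field (R ⧸ p) := Ideal.Quotient.field p
  haveI : Module.Finite (R ⧸ p) M := Module.Finite.of_restrictScalars_finite R (R ⧸ p) M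
  haveI hart : IsArtinian (R ⧸ p) M := isArtinian_of_fg_of_artinian'
  -- transfer along the surjection `R → R ⧸ p`
  let e : Submodule R M ↪o Submodule (R ⧸ p) M :=
    { toFun := fun N =>
        { carrier := N
          zero_mem' := N.zero_mem
          add_mem' := fun ha hb => N.add_mem ha hb
          smul_mem' := by
            intro r x hx
            obtain ⟨r', rfl⟩ := Ideal.Quotient.mk_surjective r
            rw [htor.mk_smul]
            exact N.smul_mem r' hx }
      inj' := fun N₁ N₂ h => by
        ext x
        exact SetLike.ext_iff.mp h x
      map_rel_iff' := Iff.rfl }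
  exact ⟨e.ltEmbedding.wellFounded hart.wf⟩

/-- A noetherian ring in which some power of a maximal ideal is zero is Artinian. -/
lemma artinian_of_nilpotent_max [IsNoetherianRing R] (p : Ideal R) (hp : p.IsMaximal)
    (k : ℕ) (hk : p ^ k = ⊥) : IsArtinianRing R := by
  have key : ∀ i : ℕ, IsArtinian R (R ⧸ (p ^ i : Ideal R)) := by
    intro i
    induction i with
    | zero =>
      have h0 : (p ^ 0 : Ideal R) = ⊤ := by simp
      rw [h0]
      haveI : Subsingleton (R ⧸ (⊤ : Ideal R)) :=
        Submodule.Quotient.subsingleton_iff.mpr rfl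
      infer_instance
    | succ i ih =>
      have hle : (p ^ (i + 1) : Ideal R) ≤ p ^ i := Ideal.pow_le_pow_right (Nat.le_succ i)
      set S : Submodule R (R ⧸ (p ^ (i + 1) : Ideal R)) :=
        Submodule.map (p ^ (i + 1) : Ideal R).mkQ (p ^ i : Ideal R) with hS
      haveI hart1 : IsArtinian R S := by
        haveI : Module.Finite R S := by
          rw [Module.Finite.iff_fg]
          exact IsNoetherian.noetherian S
        refine isArtinian_of_max_ann p hp ?_
        rintro r hr ⟨mv, hmv⟩
        obtain ⟨x, hx, rfl⟩ := hmv
        apply Subtype.ext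
        show r • ((p ^ (i + 1) : Ideal R).mkQ x) = (0 : R ⧸ (p ^ (i + 1) : Ideal R))
        rw [← map_smul, Submodule.mkQ_apply, Submodule.Quotient.mk_eq_zero]
        show r * x ∈ (p ^ (i + 1) : Ideal R)
        rw [pow_succ']
        exact Ideal.mul_mem_mul hr hx
      haveI hart2 : IsArtinian R ((R ⧸ (p ^ (i + 1) : Ideal R)) ⧸ S) :=
        isArtinian_of_linearEquiv
          (Submodule.quotientQuotientEquivQuotient (p ^ (i + 1) : Ideal R) (p ^ i) hle).symm
      exact (isArtinian_iff_submodule_quotient S).mpr ⟨hart1, hart2⟩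
  have hfin := key k
  rw [hk] at hfin
  exact isArtinian_of_linearEquiv (Submodule.quotEquivOfEqBot (⊥ : Ideal R) rfl)

/-- Quotient by an ideal whose radical is maximal, in a noetherian ring, is Artinian. -/
lemma artinian_quot_of_radical_max [IsNoetherianRing R] (J p : Ideal R) (hp : p.IsMaximal)
    (hrad : J.radical = p) : IsArtinianRing (R ⧸ J) := by
  obtain ⟨k, hk⟩ := Ideal.exists_radical_pow_le_of_fg J (by rw [hrad]; exact IsNoetherian.noetherian p)
  rw [hrad] at hk
  have hJp : J ≤ p := by rw [← hrad]; exact Ideal.le_radical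
  set p' : Ideal (R ⧸ J) := p.map (Ideal.Quotient.mk J) with hp'
  have hmax : p'.IsMaximal := by
    rcases Ideal.map_eq_top_or_isMaximal_of_surjective (Ideal.Quotient.mk J) Ideal.Quotient.mk_surjective hp with h | h
    · exfalso
      have hc := congrArg (Ideal.comap (Ideal.Quotient.mk J)) h
      rw [Ideal.comap_map_of_surjective _ Ideal.Quotient.mk_surjective, Ideal.comap_top] at hc
      have : p ⊔ Ideal.comap (Ideal.Quotient.mk J) ⊥ = p := by
        rw [← RingHom.ker_eq_comap_bot, Ideal.mk_ker]
        exact sup_eq_left.mpr hJp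
      rw [this] at hc
      exact hp.ne_top hc
    · exact h
  have hnil : p' ^ k = ⊥ := by
    rw [hp', ← Ideal.map_pow]
    exact le_bot_iff.mp ((Ideal.map_mono hk).trans (le_of_eq (Ideal.map_quotient_self J)))
  exact artinian_of_nilpotent_max p' hmax k hnil
set_option maxHeartbeats 1000000 in
/-- Core of Krull's principal ideal theorem argument. -/
lemma pit_core {R : Type*} [CommRing R] [IsNoetherianRing R] [IsLocalRing R]
    (Y : Ideal R) (a : R)
    (hrad : (Y ⊔ Ideal.span {a}).radical = IsLocalRing.maximalIdeal R)
    (P q : Ideal R) [hP : P.IsPrime] [hq : q.IsPrime] (hYP : Y ≤ P) (hPq : P ≤ q)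
    (hql : q < IsLocalRing.maximalIdeal R) : q ≤ P := by
  set J : Ideal R := Y ⊔ Ideal.span {a} with hJ
  have haJ : a ∈ J := Ideal.mem_sup_right (Ideal.mem_span_singleton_self a)
  have ham : a ∈ IsLocalRing.maximalIdeal R := hrad ▸ Ideal.le_radical haJ
  have haq : a ∉ q := by
    intro h
    have hJq : J ≤ q := sup_le (hYP.trans hPq) ((Ideal.span_le).mpr (by simpa using h))
    have : IsLocalRing.maximalIdeal R ≤ q := by
      rw [← hrad, ← hq.radical]
      exact Ideal.radical_mono hJq
    exact absurd (lt_of_lt_of_le hql this) (lt_irrefl q)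
  set L := Localization.AtPrime q with hL
  set f := algebraMap R L with hf
  set S : ℕ → Ideal R := fun n => Ideal.comap f (Ideal.map f (q ^ n ⊔ Y)) with hSdef
  have hSchar : ∀ n x, x ∈ S n ↔ ∃ u ∉ q, u * x ∈ q ^ n ⊔ Y := fun n x =>
    mem_comap_map_atPrime q (q ^ n ⊔ Y) x
  have hSanti : ∀ n, S (n + 1) ≤ S n := fun n =>
    Ideal.comap_mono (Ideal.map_mono (sup_le_sup_right (Ideal.pow_le_pow_right (Nat.le_succ n)) Y))
  have hYS : ∀ n, Y ≤ S n := fun n => le_trans le_sup_right Ideal.le_comap_map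
  haveI hart : IsArtinianRing (R ⧸ J) :=
    artinian_quot_of_radical_max J _ (IsLocalRing.maximalIdeal.isMaximal R) hrad
  -- stabilization of the chain of images in `R ⧸ J`
  have hmono : ∀ ⦃i j : ℕ⦄, i ≤ j → S j ≤ S i := by
    intro i j hij
    induction hij with
    | refl => exact le_rfl
    | step h ih => exact le_trans (hSanti _) ih
  obtain ⟨N, hN⟩ := IsArtinian.monotone_stabilizes (R := R ⧸ J) (M := R ⧸ J)
    ⟨fun n => OrderDual.toDual (Ideal.map (Ideal.Quotient.mk J) (S n)),
      fun i j hij => OrderDual.toDual_le_toDual.mpr (Ideal.map_mono (hmono hij))⟩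
  have hg : Ideal.map (Ideal.Quotient.mk J) (S N) = Ideal.map (Ideal.Quotient.mk J) (S (N + 1)) :=
    congrArg OrderDual.ofDual (hN (N + 1) (Nat.le_succ N))
  have hcomap : ∀ n, Ideal.comap (Ideal.Quotient.mk J) (Ideal.map (Ideal.Quotient.mk J) (S n))
      = S n ⊔ J := by
    intro n
    rw [Ideal.comap_map_of_surjective _ Ideal.Quotient.mk_surjective, ← RingHom.ker_eq_comap_bot,
      Ideal.mk_ker]
  have hsupJ : S N ⊔ J = S (N + 1) ⊔ J := by
    rw [← hcomap N, ← hcomap (N + 1), hg]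
  have habs : ∀ n, S n ⊔ J = S n ⊔ Ideal.span {a} := by
    intro n
    rw [hJ, ← sup_assoc, sup_eq_left.mpr (hYS n)]
  have heq : S N ⊔ Ideal.span {a} = S (N + 1) ⊔ Ideal.span {a} := by
    rw [← habs N, ← habs (N + 1), hsupJ]
  -- Nakayama step in `R`
  have key : S N ≤ S (N + 1) ⊔ Ideal.span {a} • S N := by
    intro x hx
    have hx2 : x ∈ S (N + 1) ⊔ Ideal.span {a} := heq ▸ Submodule.mem_sup_left hx
    rw [Submodule.mem_sup] at hx2
    obtain ⟨y, hy, z, hz, rfl⟩ := hx2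
    rw [Ideal.mem_span_singleton'] at hz
    obtain ⟨t, rfl⟩ := hz
    have hta : t * a ∈ S N := by
      have : (y + t * a) - y ∈ S N := Submodule.sub_mem _ hx (hSanti N hy)
      simpa using this
    have htS : t ∈ S N := by
      rw [hSchar] at hta ⊢
      obtain ⟨u, hu, hu2⟩ := hta
      refine ⟨u * a, fun h => ?_, ?_⟩
      · rcases hq.mem_or_mem h with h | h
        · exact hu h
        · exact haq h
      · have : u * a * t = u * (t * a) := by ring
        rw [this]; exact hu2
    have hmem : t * a ∈ Ideal.span {a} • S N := by
      rw [mul_comm]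
      exact Submodule.smul_mem_smul (Ideal.mem_span_singleton_self a) htS
    exact Submodule.add_mem_sup hy hmem
  have hana : Ideal.span {a} ≤ (⊥ : Ideal R).jacobson := by
    rw [IsLocalRing.jacobson_eq_maximalIdeal (⊥ : Ideal R) bot_ne_top]
    exact (Ideal.span_le).mpr (by simpa using ham)
  have hnak := Submodule.sup_eq_sup_smul_of_le_smul_of_le_jacobson
    (IsNoetherian.noetherian (S N)) hana key
  rw [Submodule.bot_smul, sup_bot_eq] at hnak
  have hstab : S N = S (N + 1) := by
    have h1 : S (N + 1) ⊔ S N = S N := sup_eq_right.mpr (hSanti N)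
    rw [h1] at hnak
    exact hnak
  -- pass to the localization at q
  have hext : Ideal.map f (q ^ N ⊔ Y) = Ideal.map f (q ^ (N + 1) ⊔ Y) := by
    have h1 := IsLocalization.map_comap q.primeCompl L (Ideal.map f (q ^ N ⊔ Y))
    have h2 := IsLocalization.map_comap q.primeCompl L (Ideal.map f (q ^ (N + 1) ⊔ Y))
    calc Ideal.map f (q ^ N ⊔ Y) = Ideal.map f (S N) := h1.symm
      _ = Ideal.map f (S (N + 1)) := by rw [hstab]
      _ = Ideal.map f (q ^ (N + 1) ⊔ Y) := h2
  haveI hnoethL : IsNoetherianRing L := IsLocalization.isNoetherianRing q.primeCompl L ‹_›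
  set E : Ideal L := Ideal.map f (q ^ N ⊔ Y) with hE
  have hmapq : Ideal.map f q ≤ IsLocalRing.maximalIdeal L :=
    le_of_eq Localization.AtPrime.map_eq_maximalIdeal
  have hnak2 : Ideal.map f Y ⊔ E = Ideal.map f Y ⊔ (⊥ : Ideal L) • E := by
    refine Submodule.sup_eq_sup_smul_of_le_smul_of_le_jacobson (IsNoetherian.noetherian E)
      (le_of_eq (IsLocalRing.jacobson_eq_maximalIdeal (⊥ : Ideal L) bot_ne_top).symm) ?_
    rw [Ideal.smul_eq_mul]
    have h2 : Ideal.map f (q ^ (N + 1)) ≤ IsLocalRing.maximalIdeal L * E := by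
      have hpow : q ^ (N + 1) = q * q ^ N := pow_succ' q N
      rw [hpow, Ideal.map_mul]
      exact Ideal.mul_mono hmapq (Ideal.map_mono le_sup_left)
    calc E = Ideal.map f (q ^ (N + 1) ⊔ Y) := hext
      _ = Ideal.map f (q ^ (N + 1)) ⊔ Ideal.map f Y := Ideal.map_sup _ _ _
      _ ≤ (IsLocalRing.maximalIdeal L * E) ⊔ Ideal.map f Y := sup_le_sup_right h2 _
      _ ≤ Ideal.map f Y ⊔ IsLocalRing.maximalIdeal L * E := le_of_eq (sup_comm _ _)
  rw [Submodule.bot_smul, sup_bot_eq] at hnak2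
  have hEY : E ≤ Ideal.map f Y := by
    rw [← hnak2]
    exact le_sup_right
  -- conclude
  have hqNP : q ^ N ≤ P := by
    intro x hx
    have hfx : f x ∈ E := Ideal.mem_map_of_mem f (Ideal.mem_sup_left hx)
    have : x ∈ Ideal.comap f (Ideal.map f Y) := hEY hfx
    obtain ⟨u, hu, huY⟩ := (mem_comap_map_atPrime q Y x).mp this
    rcases hP.mem_or_mem (hYP huY) with h | h
    · exact absurd (hPq h) hu
    · exact h
  exact Ideal.IsPrime.le_of_pow_le hqNP

end KrullHeight

/-- **Krull's height theorem**. -/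
theorem krull_height_thm : ∀ (k : ℕ) (R : Type u) [CommRing R] [IsNoetherianRing R]
    (s : Finset R) (p : PrimeSpectrum R), s.card ≤ k →
    p.asIdeal ∈ (Ideal.span (s : Set R)).minimalPrimes → Order.height p ≤ (k : ℕ∞) := by
  intro k
  induction k with
  | zero =>
    intro R _ _ s p hcard hmin
    have hs : s = ∅ := Finset.card_eq_zero.mp (Nat.le_zero.mp hcard)
    subst hs
    refine Order.height_le_coe_iff.mpr fun y hy => absurd ?_ (not_le_of_gt hy)
    have : p.asIdeal ≤ y.asIdeal :=
      hmin.2 ⟨y.2, by simp [Ideal.span_empty]⟩ (le_of_lt (show y.asIdeal < p.asIdeal from hy))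
    exact this
  | succ j IH =>
    intro R _ _ s p hcard hmin
    classical
    haveI hpprime : p.asIdeal.IsPrime := p.2
    set L := Localization.AtPrime p.asIdeal with hLdef
    set f := algebraMap R L with hfdef
    haveI hnoethL : IsNoetherianRing L :=
      IsLocalization.isNoetherianRing p.asIdeal.primeCompl L ‹_›
    set m' := IsLocalRing.maximalIdeal L with hm'def
    have hcomapmax : Ideal.comap f m' = p.asIdeal := Localization.AtPrime.comap_maximalIdeal
    have hspanle : Ideal.span (s : Set R) ≤ p.asIdeal := hmin.1.2
    have hm'prime : m'.IsPrime := (IsLocalRing.maximalIdeal.isMaximal L).isPrime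
    have huniq : ∀ Q : Ideal L, Q.IsPrime → Ideal.map f (Ideal.span (s : Set R)) ≤ Q → Q = m' := by
      intro Q hQ hle
      have h1 : Ideal.span (s : Set R) ≤ Ideal.comap f Q :=
        le_trans Ideal.le_comap_map (Ideal.comap_mono hle)
      haveI := hQ
      have h2 : Ideal.comap f Q ≤ p.asIdeal :=
        le_trans (Ideal.comap_mono (IsLocalRing.le_maximalIdeal hQ.ne_top)) (le_of_eq hcomapmax)
      have h3 : p.asIdeal ≤ Ideal.comap f Q := hmin.2 ⟨Ideal.IsPrime.comap f, h1⟩ h2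
      have h4 : Ideal.comap f Q = p.asIdeal := le_antisymm h2 h3
      refine le_antisymm (IsLocalRing.le_maximalIdeal hQ.ne_top) ?_
      have hmm : Ideal.map f p.asIdeal = m' := Localization.AtPrime.map_eq_maximalIdeal
      calc m' = Ideal.map f p.asIdeal := hmm.symm
        _ = Ideal.map f (Ideal.comap f Q) := by rw [h4]
        _ ≤ Q := Ideal.map_comap_le
    have hmapm : Ideal.map f (Ideal.span (s : Set R)) ≤ m' := by
      exact le_trans (Ideal.map_mono hspanle)
        (le_of_eq Localization.AtPrime.map_eq_maximalIdeal)
    have hrad : (Ideal.map f (Ideal.span (s : Set R))).radical = m' := by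
      rw [Ideal.radical_eq_sInf]
      apply le_antisymm
      · exact sInf_le ⟨hmapm, hm'prime⟩
      · exact le_sInf fun J hJ => le_of_eq (huniq J hJ.2 hJ.1).symm
    set mpt : PrimeSpectrum L := ⟨m', hm'prime⟩ with hmpt
    suffices hm : Order.height mpt ≤ ((j + 1 : ℕ) : ℕ∞) by
      apply Order.height_le
      intro ser hlast
      have hle : ∀ i, (ser i).asIdeal ≤ p.asIdeal := by
        intro i
        have h1 : ser i ≤ ser (Fin.last _) := ser.monotone (Fin.le_last i)
        rw [show ser (Fin.last _) = RelSeries.last ser from rfl, hlast] at h1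
        exact h1
      have hdisj : ∀ i, Disjoint ((p.asIdeal.primeCompl : Submonoid R) : Set R)
          ((ser i).asIdeal : Set R) := by
        intro i
        rw [Set.disjoint_left]
        intro x hx hx2
        exact hx (hle i hx2)
      set iso := IsLocalization.orderIsoOfPrime p.asIdeal.primeCompl L with hiso
      set g : Fin (ser.length + 1) → PrimeSpectrum L := fun i =>
        ⟨(iso.symm ⟨(ser i).asIdeal, (ser i).2, hdisj i⟩ : {Q : Ideal L // Q.IsPrime}).1,
          (iso.symm ⟨(ser i).asIdeal, (ser i).2, hdisj i⟩).2⟩ with hg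
      have hgmono : StrictMono g := by
        intro i i' hii
        have h1 : ser i < ser i' := ser.strictMono hii
        have h2 : (ser i).asIdeal < (ser i').asIdeal := h1
        show (g i).asIdeal < (g i').asIdeal
        have := iso.symm.strictMono
          (a := ⟨(ser i).asIdeal, (ser i).2, hdisj i⟩)
          (b := ⟨(ser i').asIdeal, (ser i').2, hdisj i'⟩)
          (Subtype.mk_lt_mk.mpr h2)
        exact this
      set ser' : LTSeries (PrimeSpectrum L) :=
        { length := ser.length
          toFun := g
          step := fun i => hgmono (Fin.castSucc_lt_succ (i := i)) } with hser'
      have hlast' : RelSeries.last ser' ≤ mpt :=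
        IsLocalRing.le_maximalIdeal (ser' _).2.ne_top
      calc (ser.length : ℕ∞) = (ser'.length : ℕ∞) := rfl
        _ ≤ Order.height mpt := Order.length_le_height hlast'
        _ ≤ ((j + 1 : ℕ) : ℕ∞) := hm
    -- bound the height of the maximal ideal of L
    refine Order.height_le_coe_iff.mpr fun y hy => ?_
    have hym : y.asIdeal < m' := hy
    -- find a prime maximal among those between y and m'
    obtain ⟨q1, hq1mem, hq1max⟩ := (set_has_maximal_iff_noetherian.mpr inferInstance)
      {q' : Ideal L | q'.IsPrime ∧ y.asIdeal ≤ q' ∧ q' < m'}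
      ⟨y.asIdeal, y.2, le_rfl, hym⟩
    obtain ⟨hq1p, hyq1, hq1m⟩ := hq1mem
    have hs' : Ideal.span ((s.image f : Finset L) : Set L)
        = Ideal.map f (Ideal.span (s : Set R)) := by
      rw [Finset.coe_image, Ideal.map_span]
    have hsm' : ∀ c ∈ s.image f, c ∈ m' := fun c hc =>
      hmapm (hs' ▸ Ideal.subset_span hc)
    obtain ⟨a, has', haq1⟩ : ∃ a ∈ s.image f, a ∉ (q1 : Ideal L) := by
      by_contra hall
      push_neg at hall
      have : Ideal.map f (Ideal.span (s : Set R)) ≤ q1 := by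
        rw [← hs']
        exact Ideal.span_le.mpr fun c hc => hall c hc
      have : m' ≤ q1 := by
        rw [← hrad, ← hq1p.radical]
        exact Ideal.radical_mono this
      exact absurd (lt_of_le_of_lt this hq1m) (lt_irrefl _)
    have ham' : a ∈ m' := hsm' a has'
    have hcov : ∀ r : Ideal L, r.IsPrime → q1 < r → r = m' := by
      intro r hr hlt
      rcases eq_or_lt_of_le (IsLocalRing.le_maximalIdeal hr.ne_top) with h | h
      · exact h
      · exact absurd hlt (hq1max r ⟨hr, le_trans hyq1 hlt.le, h⟩)
    set t := (s.image f).erase a with ht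
    have hex : ∀ b : {x // x ∈ t}, ∃ (nb : ℕ) (yb : L), yb ∈ (q1 : Ideal L) ∧
        (b : L) ^ nb - yb ∈ Ideal.span {a} := by
      intro b
      have hbm : (b : L) ∈ m' := hsm' b (Finset.mem_of_mem_erase b.2)
      have hradq1 : (q1 ⊔ Ideal.span {a} : Ideal L).radical = m' := by
        rw [Ideal.radical_eq_sInf]
        apply le_antisymm
        · refine sInf_le ⟨sup_le (le_of_lt hq1m) ?_, hm'prime⟩
          exact Ideal.span_le.mpr (by simpa using ham')
        · refine le_sInf fun r hr => ?_
          have hq1r : (q1 : Ideal L) < r := by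
            refine lt_of_le_of_ne (le_trans le_sup_left hr.1) ?_
            intro hEq
            exact haq1 (hEq ▸ hr.1 (Ideal.mem_sup_right (Ideal.mem_span_singleton_self a)))
          exact le_of_eq (hcov r hr.2 hq1r).symm
      have : (b : L) ∈ (q1 ⊔ Ideal.span {a} : Ideal L).radical := hradq1 ▸ hbm
      rw [Ideal.mem_radical_iff] at this
      obtain ⟨nb, hnb⟩ := this
      rw [Submodule.mem_sup] at hnb
      obtain ⟨yb, hyb, zb, hzb, heq⟩ := hnb
      refine ⟨nb, yb, hyb, ?_⟩
      have : (b : L) ^ nb - yb = zb := by rw [← heq]; ring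
      rw [this]
      exact hzb
    choose nb yb hyb1 hyb2 using hex
    set Yi : Ideal L := Ideal.span ((t.attach.image yb : Finset L) : Set L) with hYi
    have hYq1 : Yi ≤ (q1 : Ideal L) := by
      rw [hYi]
      apply Ideal.span_le.mpr
      intro z hz
      rw [Finset.coe_image] at hz
      obtain ⟨b, _, rfl⟩ := hz
      exact hyb1 b
    have hcard' : (t.attach.image yb).card ≤ j := by
      refine le_trans Finset.card_image_le ?_
      rw [Finset.card_attach, ht, Finset.card_erase_of_mem has']
      have h1 : (s.image f).card ≤ j + 1 := le_trans Finset.card_image_le hcard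
      omega
    have hradYa : (Yi ⊔ Ideal.span {a}).radical = m' := by
      rw [Ideal.radical_eq_sInf]
      apply le_antisymm
      · refine sInf_le ⟨sup_le (hYq1.trans (le_of_lt hq1m)) ?_, hm'prime⟩
        exact Ideal.span_le.mpr (by simpa using ham')
      · refine le_sInf fun r hr => ?_
        have hsr : ∀ c ∈ s.image f, c ∈ r := by
          intro c hc
          rcases eq_or_ne c a with rfl | hne
          · exact hr.1 (Ideal.mem_sup_right (Ideal.mem_span_singleton_self c))
          · have hct : c ∈ t := Finset.mem_erase.mpr ⟨hne, hc⟩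
            have h1 : yb ⟨c, hct⟩ ∈ r := by
              refine hr.1 (Ideal.mem_sup_left ?_)
              rw [hYi]
              exact Ideal.subset_span (by
                rw [Finset.coe_image]
                exact ⟨⟨c, hct⟩, Finset.mem_coe.mpr (Finset.mem_attach _ _), rfl⟩)
            have h2 : c ^ nb ⟨c, hct⟩ - yb ⟨c, hct⟩ ∈ r :=
              hr.1 (Ideal.mem_sup_right (hyb2 ⟨c, hct⟩))
            have h3 : c ^ nb ⟨c, hct⟩ ∈ r := by
              have := r.add_mem h2 h1
              simpa using this
            exact hr.2.mem_of_pow_mem _ h3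
        have hmapr : Ideal.map f (Ideal.span (s : Set R)) ≤ r := by
          rw [← hs']
          exact Ideal.span_le.mpr fun c hc => hsr c hc
        exact le_of_eq (huniq r hr.2 hmapr).symm
    haveI := hq1p
    have hq1minY : (q1 : Ideal L) ∈ Yi.minimalPrimes := by
      constructor
      · exact ⟨hq1p, hYq1⟩
      · intro P hP hPle
        haveI := hP.1
        exact pit_core Yi a hradYa P q1 hP.2 hPle hq1m
    have hIH := IH L (t.attach.image yb) ⟨q1, hq1p⟩ hcard' hq1minY
    have hmono : Order.height y ≤ Order.height (⟨q1, hq1p⟩ : PrimeSpectrum L) :=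
      Order.height_mono (show y.asIdeal ≤ (q1 : Ideal L) from hyq1)
    calc Order.height y ≤ (j : ℕ∞) := le_trans hmono hIH
      _ < ((j + 1 : ℕ) : ℕ∞) := by
        exact_mod_cast Nat.lt_succ_self j

/-- If an ideal is generated by the range of a function from `Fin m`, and is proper,
then there is a prime of height at most `m` containing it. -/
theorem exists_prime_height_le {R : Type u} [CommRing R] [IsNoetherianRing R] {m : ℕ}
    (b : Fin m → R) (hne : Ideal.span (Set.range b) ≠ ⊤) :
    ∃ p : PrimeSpectrum R, Ideal.span (Set.range b) ≤ p.asIdeal ∧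
      Order.height p ≤ (m : ℕ∞) := by
  classical
  obtain ⟨M, hM, hBM⟩ := Ideal.exists_le_maximal _ hne
  haveI := hM.isPrime
  obtain ⟨p0, hp0min, _⟩ := Ideal.exists_minimalPrimes_le hBM
  haveI hp0prime : p0.IsPrime := hp0min.1.1
  have hcoe : ((Finset.univ.image b : Finset R) : Set R) = Set.range b := by
    rw [Finset.coe_image, Finset.coe_univ, Set.image_univ]
  have hcard : (Finset.univ.image b).card ≤ m := by
    refine le_trans Finset.card_image_le ?_
    simp
  refine ⟨⟨p0, hp0prime⟩, hp0min.1.2, ?_⟩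
  exact krull_height_thm m R (Finset.univ.image b) ⟨p0, hp0prime⟩ hcard (by rw [hcoe]; exact hp0min)


/-- Over a noetherian UFD, if `A ≠ 0` and all `2 × 2` minors of `A` vanish, then
the ideal `I₁(A)` generated by the entries of `A` is either the whole ring or has
height at most `max m n` (a prime containing it of height at most `max m n`
exists). -/
theorem height_of_entries_ideal (R : Type*) [CommRing R] [IsDomain R]
    [IsNoetherianRing R] [UniqueFactorizationMonoid R] (m n : ℕ)
    (A : Matrix (Fin m) (Fin n) R) (hne : A ≠ 0)
    (hminors : ∀ i k j l, A i j * A k l = A i l * A k j) :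
    Ideal.span (Set.range fun p : Fin m × Fin n => A p.1 p.2) = ⊤ ∨
    ∃ p : PrimeSpectrum R,
      Ideal.span (Set.range fun p : Fin m × Fin n => A p.1 p.2) ≤ p.asIdeal ∧
      Order.height p ≤ (max m n : ℕ∞) := by
  classical
  letI : StrongNormalizationMonoid R := UniqueFactorizationMonoid.normalizationMonoid
  letI : StrongNormalizedGCDMonoid R := UniqueFactorizationMonoid.toStrongNormalizedGCDMonoid R
  set I₁ := Ideal.span (Set.range fun p : Fin m × Fin n => A p.1 p.2) with hI₁
  -- find a nonzero entry
  obtain ⟨i0, j0, h00⟩ : ∃ i j, A i j ≠ 0 := by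
    by_contra h
    push_neg at h
    exact hne (by ext i j; simp [h])
  -- gcd of the j0-th column
  set d := Finset.univ.gcd (fun i => A i j0) with hd
  have hdne : d ≠ 0 := by
    intro h
    rw [hd] at h
    exact h00 (Finset.gcd_eq_zero_iff.mp h i0 (Finset.mem_univ _))
  have hdvd : ∀ i, d ∣ A i j0 := fun i => Finset.gcd_dvd (Finset.mem_univ i)
  choose b hb using hdvd
  -- gcd of the b's is a unit
  have hgcdb : IsUnit (Finset.univ.gcd b) := by
    have h1 : d = normalize d * Finset.univ.gcd b := by
      calc d = Finset.univ.gcd (fun i => A i j0) := hd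
        _ = Finset.univ.gcd (fun i => d * b i) := Finset.gcd_congr rfl (fun i _ => hb i)
        _ = normalize d * Finset.univ.gcd b := Finset.gcd_mul_left
    have h2 : d * 1 = d * (↑(normUnit d) * Finset.univ.gcd b) := by
      rw [mul_one]
      conv_lhs => rw [h1]
      rw [normalize_apply]
      ring
    have h3 : (1 : R) = ↑(normUnit d) * Finset.univ.gcd b := mul_left_cancel₀ hdne h2
    exact isUnit_of_mul_isUnit_right (by rw [← h3]; exact isUnit_one)
  -- key divisibility
  have hcross : ∀ i k j, b i * A k j = A i j * b k := by
    intro i k j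
    apply mul_left_cancel₀ hdne
    calc d * (b i * A k j) = (d * b i) * A k j := by ring
      _ = A i j0 * A k j := by rw [← hb i]
      _ = A i j * A k j0 := (hminors i k j j0).symm
      _ = A i j * (d * b k) := by rw [hb k]
      _ = d * (A i j * b k) := by ring
  have hbdvd : ∀ i j, b i ∣ A i j := by
    intro i j
    have h1 : ∀ k ∈ Finset.univ, b i ∣ A i j * b k := fun k _ => ⟨A k j, (hcross i k j).symm⟩
    have h2 : b i ∣ Finset.univ.gcd (fun k => A i j * b k) := Finset.dvd_gcd h1
    rw [Finset.gcd_mul_left] at h2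
    have h3 : Associated (normalize (A i j) * Finset.univ.gcd b) (A i j) := by
      have h4 := Associated.mul_left (normalize (A i j)) (associated_one_iff_isUnit.mpr hgcdb)
      rw [mul_one] at h4
      exact h4.trans (normalize_associated _)
    exact h2.trans h3.dvd
  have hb0 : b i0 ≠ 0 := by
    intro h
    have h5 := hb i0
    rw [h, mul_zero] at h5
    exact h00 h5
  choose c hc using fun j => hbdvd i0 j
  have hfact : ∀ i j, A i j = b i * c j := by
    intro i j
    apply mul_left_cancel₀ hb0
    calc b i0 * A i j = A i0 j * b i := hcross i0 i j
      _ = (b i0 * c j) * b i := by rw [← hc j]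
      _ = b i0 * (b i * c j) := by ring
  -- the two candidate ideals
  set B := Ideal.span (Set.range b) with hB
  set C := Ideal.span (Set.range c) with hC
  have hIB : I₁ ≤ B := by
    rw [hI₁]
    refine Ideal.span_le.mpr ?_
    rintro x ⟨⟨i, j⟩, rfl⟩
    show A i j ∈ B
    rw [hfact i j, mul_comm]
    exact Ideal.mul_mem_left _ _ (Ideal.subset_span ⟨i, rfl⟩)
  have hIC : I₁ ≤ C := by
    rw [hI₁]
    refine Ideal.span_le.mpr ?_
    rintro x ⟨⟨i, j⟩, rfl⟩
    show A i j ∈ C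
    rw [hfact i j]
    exact Ideal.mul_mem_left _ _ (Ideal.subset_span ⟨j, rfl⟩)
  by_cases hBtop : B = ⊤
  · by_cases hCtop : C = ⊤
    · -- both top: I₁ = ⊤
      left
      have hBC : B * C ≤ I₁ := by
        rw [hB, hC, Ideal.span_mul_span']
        refine Ideal.span_le.mpr ?_
        rintro x hx
        obtain ⟨u, ⟨i, rfl⟩, v, ⟨j, rfl⟩, rfl⟩ := hx
        have h6 : A i j ∈ I₁ := Ideal.subset_span ⟨(i, j), rfl⟩
        rwa [hfact i j] at h6
      rw [hBtop, hCtop, Ideal.top_mul] at hBC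
      exact top_le_iff.mp hBC
    · -- C proper
      right
      obtain ⟨p, hp1, hp2⟩ := exists_prime_height_le c hCtop
      exact ⟨p, le_trans hIC hp1, le_trans hp2 (by exact_mod_cast Nat.cast_le.mpr (le_max_right m n))⟩
  · -- B proper
    right
    obtain ⟨p, hp1, hp2⟩ := exists_prime_height_le b hBtop
    exact ⟨p, le_trans hIB hp1, le_trans hp2 (by exact_mod_cast Nat.cast_le.mpr (le_max_left m n))⟩
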